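/- Theorem 1 (case λ < λ̄): If λ < λ̄, then the probability that the minimum-distance rule correctly de-anonymizes u from the pair {u′, v} satisfies P(X < Y) ≥ 1 − 2·exp(−(λ − λ̄)²/(4δ²)); equivalently, P(X ≥ Y) ≤ 2·exp(−(λ − λ̄)²/(4δ²)). -/

import Mathlib

open MeasureTheory

lemma integrable_of_abs_bound {Ω : Type*} [MeasurableSpace Ω] (P : Measure Ω)
    [IsFiniteMeasure P] (f : Ω → ℝ) (hf : Measurable f) (C : ℝ)
    (h : ∀ ω, |f ω| ≤ C) : Integrable f P :=
  (integrable_const C).mono' hf.aestronglyMeasurable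
    (Filter.Eventually.of_forall fun ω => by simpa using h ω)

lemma mgf_le_of_abs_bound {Ω : Type*} [MeasurableSpace Ω] (P : Measure Ω)
    [IsProbabilityMeasure P] (W : Ω → ℝ) (hWm : Measurable W) (M u : ℝ) (hM : 0 < M)
    (hb : ∀ ω, |W ω| ≤ M) (hmean : ∫ ω, W ω ∂P = 0) :
    ProbabilityTheory.mgf W P u ≤ Real.exp (u ^ 2 * M ^ 2 / 2) := by
  have hWint : Integrable W P := integrable_of_abs_bound P W hWm M hb
  set c1 : ℝ := (Real.exp (u * M) + Real.exp (-(u * M))) / 2 with hc1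
  set c2 : ℝ := (Real.exp (u * M) - Real.exp (-(u * M))) / (2 * M) with hc2
  have key : ∀ ω, Real.exp (u * W ω) ≤ c1 + c2 * W ω := by
    intro ω
    have hb1 := (abs_le.1 (hb ω)).1
    have hb2 := (abs_le.1 (hb ω)).2
    have ha : (0:ℝ) ≤ (M - W ω) / (2 * M) := by
      apply div_nonneg (by linarith) (by linarith)
    have hb' : (0:ℝ) ≤ (M + W ω) / (2 * M) := by
      apply div_nonneg (by linarith) (by linarith)
    have hab : (M - W ω) / (2 * M) + (M + W ω) / (2 * M) = 1 := by
      field_simp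
      ring
    have h2M : (2 * M : ℝ) ≠ 0 := by positivity
    have hcvx := convexOn_exp.2 (Set.mem_univ (-(u * M))) (Set.mem_univ (u * M))
      ha hb' hab
    simp only [smul_eq_mul] at hcvx
    have harg : (M - W ω) / (2 * M) * -(u * M) + (M + W ω) / (2 * M) * (u * M)
        = u * W ω := by
      rw [div_mul_eq_mul_div, div_mul_eq_mul_div, ← add_div,
        div_eq_iff h2M]
      ring
    rw [harg] at hcvx
    have hrhs : (M - W ω) / (2 * M) * Real.exp (-(u * M))
        + (M + W ω) / (2 * M) * Real.exp (u * M) = c1 + c2 * W ω := by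
      rw [hc1, hc2]
      rw [div_mul_eq_mul_div, div_mul_eq_mul_div, ← add_div]
      rw [div_eq_iff h2M]
      have hM0 : (M:ℝ) ≠ 0 := ne_of_gt hM
      field_simp
      ring
    rw [hrhs] at hcvx
    exact hcvx
  have hexp_int : Integrable (fun ω => Real.exp (u * W ω)) P := by
    apply integrable_of_abs_bound P _ ((hWm.const_mul u).exp) (Real.exp (|u| * M))
    intro ω
    rw [Real.abs_exp]
    apply Real.exp_le_exp.2
    calc u * W ω ≤ |u * W ω| := le_abs_self _
      _ = |u| * |W ω| := abs_mul _ _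
      _ ≤ |u| * M := mul_le_mul_of_nonneg_left (hb ω) (abs_nonneg u)
  have hg_int : Integrable (fun ω => c1 + c2 * W ω) P :=
    (integrable_const c1).add (hWint.const_mul c2)
  have hmono : ProbabilityTheory.mgf W P u ≤ ∫ ω, (c1 + c2 * W ω) ∂P :=
    integral_mono hexp_int hg_int key
  have hval : ∫ ω, (c1 + c2 * W ω) ∂P = c1 := by
    rw [integral_add (integrable_const c1) (hWint.const_mul c2),
      integral_const_mul, hmean, integral_const]
    simp
  have hcosh : c1 ≤ Real.exp (u ^ 2 * M ^ 2 / 2) := by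
    have h1 : c1 = Real.cosh (u * M) := by rw [Real.cosh_eq, hc1]
    have h2 := Real.cosh_le_exp_half_sq (u * M)
    rw [h1]
    convert h2 using 2
    ring
  linarith [hmono, hval ▸ hmono]

/-- Theorem 1 (case λ < λ̄): the minimum-distance rule correctly de-anonymizes
`u` from `{u′, v}` with probability at least `1 - 2 exp(-(λ - λ̄)²/(4δ²))`;
equivalently `P(X ≥ Y) ≤ 2 exp(-(λ - λ̄)²/(4δ²))`. -/
theorem theorem1_case_lt
    {Ω : Type*} [MeasurableSpace Ω] (P : Measure Ω) [IsProbabilityMeasure P]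
    (X Y : Ω → ℝ) (hXm : Measurable X) (hYm : Measurable Y)
    (θl θu θbl θbu lam lamb θ θb δ : ℝ)
    (hXr : ∀ ω, X ω ∈ Set.Icc θl θu)
    (hYr : ∀ ω, Y ω ∈ Set.Icc θbl θbu)
    (hlam : lam = ∫ ω, X ω ∂P)
    (hlamb : lamb = ∫ ω, Y ω ∂P)
    (hθ : θ = θu - θl) (hθb : θb = θbu - θbl) (hδ : δ = max θ θb)
    (hθpos : 0 < θ) (hθbpos : 0 < θb)
    (hlt : lam < lamb) :
    1 - 2 * Real.exp (-(lam - lamb) ^ 2 / (4 * δ ^ 2)) ≤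
        (P {ω | X ω < Y ω}).toReal ∧
      (P {ω | Y ω ≤ X ω}).toReal ≤
        2 * Real.exp (-(lam - lamb) ^ 2 / (4 * δ ^ 2)) := by
  have hexp_pos : 0 < Real.exp (-(lam - lamb) ^ 2 / (4 * δ ^ 2)) := Real.exp_pos _
  have hmeas : MeasurableSet {ω | Y ω ≤ X ω} := measurableSet_le hYm hXm
  have hθδ : θ ≤ δ := hδ ▸ le_max_left _ _
  have hθbδ : θb ≤ δ := hδ ▸ le_max_right _ _
  have hδpos : 0 < δ := lt_of_lt_of_le hθpos hθδ
  have h2 : (P {ω | Y ω ≤ X ω}).toReal ≤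
      2 * Real.exp (-(lam - lamb) ^ 2 / (4 * δ ^ 2)) := by
    by_cases hcase : θu < θbl
    · have hempty : {ω | Y ω ≤ X ω} = ∅ := by
        ext ω
        simp only [Set.mem_setOf_eq, Set.mem_empty_iff_false, iff_false, not_le]
        exact lt_of_le_of_lt (hXr ω).2 (lt_of_lt_of_le hcase (hYr ω).1)
      rw [hempty]
      simp only [measure_empty, ENNReal.toReal_zero]
      positivity
    · push_neg at hcase
      -- integrability of X, Y
      have hXint : Integrable X P := by
        apply integrable_of_abs_bound P X hXm (|θl| + |θu|)
        intro ω
        rw [abs_le]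
        constructor
        · linarith [(hXr ω).1, neg_abs_le θl, abs_nonneg θu]
        · linarith [(hXr ω).2, le_abs_self θu, abs_nonneg θl]
      have hYint : Integrable Y P := by
        apply integrable_of_abs_bound P Y hYm (|θbl| + |θbu|)
        intro ω
        rw [abs_le]
        constructor
        · linarith [(hYr ω).1, neg_abs_le θbl, abs_nonneg θbu]
        · linarith [(hYr ω).2, le_abs_self θbu, abs_nonneg θbl]
      -- mean bounds
      have hlam_ge : θl ≤ lam := by
        rw [hlam]
        have := integral_mono (integrable_const θl) hXint (fun ω => (hXr ω).1)
        simpa using this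
      have hlamb_le : lamb ≤ θbu := by
        rw [hlamb]
        have := integral_mono hYint (integrable_const θbu) (fun ω => (hYr ω).2)
        simpa using this
      set s : ℝ := lamb - lam with hs
      have hspos : 0 < s := by simp only [hs]; linarith
      have hs2δ : s ≤ 2 * δ := by
        simp only [hs]
        linarith
      set W : ℝ → ℝ := fun x => x
      set V : Ω → ℝ := fun ω => X ω - Y ω + s with hV
      have hVm : Measurable V := (hXm.sub hYm).add_const s
      have hVb : ∀ ω, |V ω| ≤ 2 * δ := by
        intro ω
        rw [abs_le]
        have h1 := (hXr ω).1
        have h2 := (hXr ω).2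
        have h3 := (hYr ω).1
        have h4 := (hYr ω).2
        constructor
        · simp only [hV]; linarith
        · simp only [hV]; linarith
      have hVmean : ∫ ω, V ω ∂P = 0 := by
        simp only [hV]
        rw [integral_add (f := fun ω => X ω - Y ω) (g := fun _ => s)
            (hXint.sub hYint) (integrable_const s),
          integral_sub hXint hYint, integral_const]
        simp [← hlam, ← hlamb, hs]
      set u : ℝ := s / (4 * δ ^ 2) with hu
      have hu0 : 0 ≤ u := by positivity
      have hVexp_int : Integrable (fun ω => Real.exp (u * V ω)) P := by
        apply integrable_of_abs_bound P _ ((hVm.const_mul u).exp) (Real.exp (u * (2 * δ)))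
        intro ω
        rw [Real.abs_exp]
        apply Real.exp_le_exp.2
        calc u * V ω ≤ u * |V ω| := mul_le_mul_of_nonneg_left (le_abs_self _) hu0
          _ ≤ u * (2 * δ) := mul_le_mul_of_nonneg_left (hVb ω) hu0
      have hset : {ω | Y ω ≤ X ω} = {ω | s ≤ V ω} := by
        ext ω
        simp only [Set.mem_setOf_eq, hV]
        constructor <;> intro h <;> linarith
      have hmarkov := ProbabilityTheory.measure_ge_le_exp_mul_mgf (μ := P) (X := V)
        s hu0 hVexp_int
      have hmgf := mgf_le_of_abs_bound P V hVm (2 * δ) u (by linarith) hVb hVmean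
      have hchain : (P {ω | Y ω ≤ X ω}).toReal ≤
          Real.exp (-u * s) * Real.exp (u ^ 2 * (2 * δ) ^ 2 / 2) := by
        rw [hset]
        calc (P {ω | s ≤ V ω}).toReal
            ≤ Real.exp (-u * s) * ProbabilityTheory.mgf V P u := hmarkov
          _ ≤ Real.exp (-u * s) * Real.exp (u ^ 2 * (2 * δ) ^ 2 / 2) :=
              mul_le_mul_of_nonneg_left hmgf (le_of_lt (Real.exp_pos _))
      have hval : Real.exp (-u * s) * Real.exp (u ^ 2 * (2 * δ) ^ 2 / 2)
          = Real.exp (-(s ^ 2) / (8 * δ ^ 2)) := by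
        rw [← Real.exp_add]
        congr 1
        simp only [hu]
        field_simp
        ring
      have hfinal : Real.exp (-(s ^ 2) / (8 * δ ^ 2)) ≤
          2 * Real.exp (-(lam - lamb) ^ 2 / (4 * δ ^ 2)) := by
        have hsq : (lam - lamb) ^ 2 = s ^ 2 := by simp only [hs]; ring
        rw [hsq]
        have hlog : s ^ 2 / (8 * δ ^ 2) ≤ Real.log 2 := by
          have h1 : s ^ 2 / (8 * δ ^ 2) ≤ 1 / 2 := by
            rw [div_le_div_iff₀ (by positivity) (by norm_num)]
            nlinarith
          linarith [Real.log_two_gt_d9]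
        calc Real.exp (-(s ^ 2) / (8 * δ ^ 2))
            ≤ Real.exp (Real.log 2 + -(s ^ 2) / (4 * δ ^ 2)) := by
              apply Real.exp_le_exp.2
              have h : -(s ^ 2) / (8 * δ ^ 2) = s ^ 2 / (8 * δ ^ 2) + -(s ^ 2) / (4 * δ ^ 2) := by
                ring
              rw [h]
              linarith
          _ = 2 * Real.exp (-(s ^ 2) / (4 * δ ^ 2)) := by
              rw [Real.exp_add, Real.exp_log two_pos]
      linarith [hval ▸ hchain]
  refine ⟨?_, h2⟩
  have hc : {ω | X ω < Y ω} = {ω | Y ω ≤ X ω}ᶜ := by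
    ext ω; simp [not_le]
  rw [hc, prob_compl_eq_one_sub hmeas,
    ENNReal.toReal_sub_of_le prob_le_one (by simp), ENNReal.toReal_one]
  linarith
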